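/- Let (G, ≤) be a partially ordered torsion-free abelian group. Then the order relation ≤ is the intersection of all of its compatible linear order extensions (that is, for all g ∈ G one has 0 ≤ g if and only if 0 ≤ₗ g for every total order ≤ₗ on G making G a linearly ordered abelian group and extending ≤) if and only if ≤ is semiclosed. -/

import Mathlib

section Aux

variable {G : Type*} [AddCommGroup G]

/-- A good cone: pointed, semiclosed submonoid. -/
def IsGoodCone (C : Set G) : Prop :=
  (0 : G) ∈ C ∧ (∀ x ∈ C, ∀ y ∈ C, x + y ∈ C) ∧
  (∀ x ∈ C, -x ∈ C → x = 0) ∧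
  (∀ (n : ℤ) (x : G), 1 ≤ n → n • x ∈ C → x ∈ C)

lemma IsGoodCone.smul_mem {C : Set G} (hC : IsGoodCone C) {k : ℤ} (hk : 0 ≤ k)
    {x : G} (hx : x ∈ C) : k • x ∈ C := by
  lift k to ℕ using hk
  induction k with
  | zero => simpa using hC.1
  | succ n ih =>
      have : ((n : ℤ) + 1) • x = (n : ℤ) • x + x := by
        rw [add_smul, one_smul]
      rw [Nat.cast_add, Nat.cast_one, this]
      exact hC.2.1 _ ih _ hx

/-- Extension of a cone by an element. -/
def ConeExt (C : Set G) (h : G) : Set G :=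
  {x | ∃ n : ℤ, 1 ≤ n ∧ ∃ m : ℤ, 0 ≤ m ∧ n • x - m • h ∈ C}

lemma subset_coneExt (C : Set G) (h : G) : C ⊆ ConeExt C h := by
  intro x hx
  exact ⟨1, le_refl 1, 0, le_refl 0, by simpa using hx⟩

lemma mem_coneExt (C : Set G) (hC : IsGoodCone C) (h : G) : h ∈ ConeExt C h :=
  ⟨1, le_refl 1, 1, by norm_num, by simpa using hC.1⟩

lemma coneExt_good (C : Set G) (hC : IsGoodCone C) (h : G) (hh : -h ∉ C) :
    IsGoodCone (ConeExt C h) := by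
  obtain ⟨h0, hadd, hpt, hsc⟩ := hC
  have hCgood : IsGoodCone C := ⟨h0, hadd, hpt, hsc⟩
  refine ⟨⟨1, le_refl 1, 0, le_refl 0, by simpa using h0⟩, ?_, ?_, ?_⟩
  · rintro x ⟨n, hn, m, hm, hc⟩ y ⟨n', hn', m', hm', hc'⟩
    refine ⟨n * n', one_le_mul_of_one_le_of_one_le hn hn', n' * m + n * m',
      by positivity, ?_⟩
    have heq : (n * n') • (x + y) - (n' * m + n * m') • h
        = n' • (n • x - m • h) + n • (n' • y - m' • h) := by
      module
    rw [heq]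
    exact hadd _ (hCgood.smul_mem (by linarith) hc) _ (hCgood.smul_mem (by linarith) hc')
  · rintro x ⟨n, hn, m, hm, hc⟩ ⟨n', hn', m', hm', hc'⟩
    have key : (n' * m + n * m') • (-h)
        = n' • (n • x - m • h) + n • (n' • (-x) - m' • h) := by
      module
    have hmem : (n' * m + n * m') • (-h) ∈ C := by
      rw [key]
      exact hadd _ (hCgood.smul_mem (by linarith) hc) _ (hCgood.smul_mem (by linarith) hc')
    have hz : n' * m + n * m' = 0 := by
      by_contra hne
      have h1 : 1 ≤ n' * m + n * m' := by
        have : 0 ≤ n' * m + n * m' := by positivity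
        omega
      exact hh (hsc _ _ h1 hmem)
    have hm0 : m = 0 := by nlinarith
    have hm'0 : m' = 0 := by nlinarith
    rw [hm0] at hc; rw [hm'0] at hc'
    simp only [zero_smul, sub_zero] at hc hc'
    exact hpt _ (hsc _ _ hn hc) (hsc _ _ hn' hc')
  · rintro k x hk ⟨n, hn, m, hm, hc⟩
    refine ⟨n * k, one_le_mul_of_one_le_of_one_le hn hk, m, hm, ?_⟩
    rwa [mul_smul]

/-- Every good cone is contained in a total good cone. -/
lemma exists_total_good_cone {C : Set G} (hC : IsGoodCone C) :
    ∃ D : Set G, C ⊆ D ∧ IsGoodCone D ∧ ∀ x : G, x ∈ D ∨ -x ∈ D := by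
  obtain ⟨D, hCD, hDmax⟩ := zorn_subset_nonempty {E : Set G | IsGoodCone E}
    (fun c hc hchain hne => by
      obtain ⟨E0, hE0⟩ := hne
      refine ⟨⋃₀ c, ⟨⟨E0, hE0, (hc hE0).1⟩, ?_, ?_, ?_⟩, fun s hs => Set.subset_sUnion_of_mem hs⟩
      · rintro x ⟨E, hE, hxE⟩ y ⟨F, hF, hyF⟩
        rcases hchain.total hE hF with hEF | hFE
        · exact ⟨F, hF, (hc hF).2.1 _ (hEF hxE) _ hyF⟩
        · exact ⟨E, hE, (hc hE).2.1 _ hxE _ (hFE hyF)⟩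
      · rintro x ⟨E, hE, hxE⟩ ⟨F, hF, hxF⟩
        rcases hchain.total hE hF with hEF | hFE
        · exact (hc hF).2.2.1 _ (hEF hxE) hxF
        · exact (hc hE).2.2.1 _ hxE (hFE hxF)
      · rintro n x hn ⟨E, hE, hxE⟩
        exact ⟨E, hE, (hc hE).2.2.2 _ _ hn hxE⟩) C hC
  have hD : IsGoodCone D := hDmax.1
  refine ⟨D, hCD, hD, fun x => ?_⟩
  by_cases hx : -x ∈ D
  · exact Or.inr hx
  · left
    have hext : IsGoodCone (ConeExt D x) := coneExt_good D hD x hx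
    have := hDmax.2 hext (subset_coneExt D x)
    exact this (mem_coneExt D hD x)

end Aux

/-- For a partially ordered torsion-free abelian group (G, ≤), the order ≤
is the intersection of all of its compatible linear order extensions iff it is semiclosed. -/
theorem stmt2 {G : Type*} [AddCommGroup G]
    (htf : ∀ (n : ℤ) (g : G), n • g = 0 → n ≠ 0 → g = 0)
    (le : G → G → Prop) (hpo : IsPartialOrder G le)
    (hcomp : ∀ a b c : G, le a b → le (a + c) (b + c)) :
    (∀ g : G, le 0 g ↔
      (∀ le' : G → G → Prop, IsLinearOrder G le' →
        (∀ a b c : G, le' a b → le' (a + c) (b + c)) →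
        (∀ a b : G, le a b → le' a b) → le' 0 g)) ↔
    (∀ (n : ℤ) (a : G), 1 ≤ n → le 0 (n • a) → le 0 a) := by
  constructor
  · -- intersection property ⟹ semiclosed
    intro H n a hn hna
    rw [H a]
    intro le' hlin hcomp' hext
    rcases hlin.total a 0 with ha0 | h0a
    · -- le' a 0 ⟹ le' (n•a) 0 ⟹ n•a = 0 ⟹ a = 0
      have hk : ∀ k : ℕ, le' ((k : ℤ) • a) 0 := by
        intro k
        induction k with
        | zero => simpa using hlin.refl 0
        | succ j ih =>
            have h1 : le' (a + (j : ℤ) • a) (0 + (j : ℤ) • a) := hcomp' _ _ _ ha0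
            rw [zero_add] at h1
            have : ((j : ℤ) + 1) • a = a + (j : ℤ) • a := by
              rw [add_smul, one_smul]; abel
            rw [Nat.cast_add, Nat.cast_one, this]
            exact hlin.trans _ _ _ h1 ih
      have hna' : le' 0 (n • a) := hext _ _ hna
      have hna0 : le' (n • a) 0 := by
        have := hk n.toNat
        rwa [Int.toNat_of_nonneg (by linarith)] at this
      have : n • a = 0 := hlin.antisymm _ _ hna0 hna'
      have ha : a = 0 := htf n a this (by omega)
      rw [ha]; exact hlin.refl 0
    · exact h0a
  · -- semiclosed ⟹ intersection property
    intro hsemi g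
    constructor
    · intro hg le' _ _ hext
      exact hext _ _ hg
    · intro H
      by_contra hng
      -- Build a total good cone containing the positive cone of le and -g
      set C : Set G := {x | le 0 x} with hCdef
      have hCgood : IsGoodCone C := by
        refine ⟨hpo.refl 0, ?_, ?_, ?_⟩
        · intro x hx y hy
          have h1 : le (0 + y) (x + y) := hcomp _ _ _ hx
          rw [zero_add] at h1
          exact hpo.trans _ _ _ hy h1
        · intro x hx hnx
          have hnx' : le 0 (-x) := hnx
          have h1 : le (0 + x) (-x + x) := hcomp _ _ _ hnx'
          rw [neg_add_cancel, zero_add] at h1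
          exact hpo.antisymm _ _ h1 hx
        · intro n x hn hx
          exact hsemi n x hn hx
      have hgC : g ∉ C := hng
      have hext1 : IsGoodCone (ConeExt C (-g)) := by
        apply coneExt_good C hCgood (-g)
        rwa [neg_neg]
      obtain ⟨D, hCD, hDgood, hDtotal⟩ := exists_total_good_cone hext1
      have hCinD : C ⊆ D := (subset_coneExt C (-g)).trans hCD
      have hngD : -g ∈ D := hCD (mem_coneExt C hCgood (-g))
      have hgD : g ∉ D := by
        intro hgD
        have : g = 0 := hDgood.2.2.1 g hgD (hngD)
        exact hng (this ▸ hpo.refl 0)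
      -- define the linear order from D
      set le' : G → G → Prop := fun a b => b - a ∈ D with hle'def
      have hlin : IsLinearOrder G le' := by
        refine { refl := fun a => by simp [hle'def, hDgood.1], trans := ?_,
                 antisymm := ?_, total := ?_ }
        · intro a b c hab hbc
          have := hDgood.2.1 _ hbc _ hab
          simpa [hle'def] using this
        · intro a b hab hba
          have hz : b - a = 0 := hDgood.2.2.1 _ hab (by simpa [hle'def, neg_sub] using hba)
          exact (sub_eq_zero.mp hz).symm
        · intro a b
          rcases hDtotal (b - a) with h | h
          · exact Or.inl h
          · right; simpa [hle'def, neg_sub] using h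
      have hcomp' : ∀ a b c : G, le' a b → le' (a + c) (b + c) := by
        intro a b c hab
        simpa [hle'def, add_sub_add_comm] using hab
      have hext' : ∀ a b : G, le a b → le' a b := by
        intro a b hab
        have h1 : le (a + -a) (b + -a) := hcomp _ _ _ hab
        rw [add_neg_cancel] at h1
        have : b - a ∈ C := by rw [sub_eq_add_neg]; exact h1
        exact hCinD this
      have := H le' hlin hcomp' hext'
      simp only [hle'def, sub_zero] at this
      exact hgD this
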